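/- With a_{3,m} := (∑_{j=1}^{m-1} (√2 · sin(πj/m))^{-1}) − m, one has a_{3,m} < 0 for m ∈ {5,6,7,8} and a_{3,m} > 0 for all integers m ≥ 9. -/

import Mathlib

open Real Finset

private lemma sqrt2_gt : (1.414213 : ℝ) < Real.sqrt 2 := by
  nlinarith [Real.sq_sqrt (by norm_num : (2:ℝ) ≥ 0), Real.sqrt_nonneg 2]

private lemma sqrt2_lt : Real.sqrt 2 < 1.4142136 := by
  nlinarith [Real.sq_sqrt (by norm_num : (2:ℝ) ≥ 0), Real.sqrt_nonneg 2]

private lemma sqrt3_gt : (1.732 : ℝ) < Real.sqrt 3 := by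
  nlinarith [Real.sq_sqrt (by norm_num : (3:ℝ) ≥ 0), Real.sqrt_nonneg 3]

private lemma sqrt3_lt : Real.sqrt 3 < 1.7320509 := by
  nlinarith [Real.sq_sqrt (by norm_num : (3:ℝ) ≥ 0), Real.sqrt_nonneg 3]

/-- upper bound for a single term `(sin x)⁻¹ * (√2)⁻¹`. -/
private lemma term_ub {x : ℝ} (a c : ℝ) (ha : 0 < a) (h : a ≤ Real.sin x)
    (hc : 1 ≤ 1.414213 * (a * c)) : (Real.sqrt 2 * Real.sin x)⁻¹ ≤ c := by
  rw [mul_inv, mul_comm]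
  have e1 : (Real.sin x)⁻¹ ≤ a⁻¹ := inv_anti₀ ha h
  have e2 : (Real.sqrt 2)⁻¹ ≤ (1.414213:ℝ)⁻¹ := inv_anti₀ (by norm_num) sqrt2_gt.le
  have e3 : (Real.sin x)⁻¹ * (Real.sqrt 2)⁻¹ ≤ a⁻¹ * (1.414213:ℝ)⁻¹ :=
    mul_le_mul e1 e2 (by positivity) (by positivity)
  refine e3.trans ?_
  rw [← mul_inv, inv_eq_one_div, div_le_iff₀ (by positivity)]
  nlinarith [hc]

/-- lower bound for a single term `(sin x)⁻¹ * (√2)⁻¹`. -/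
private lemma term_lb {x : ℝ} (a c : ℝ) (h0 : 0 < Real.sin x) (h : Real.sin x ≤ a)
    (hc : 1.4142136 * (a * c) ≤ 1) (hc0 : 0 ≤ c) :
    c ≤ (Real.sqrt 2 * Real.sin x)⁻¹ := by
  rw [mul_inv, mul_comm]
  have ha : 0 < a := lt_of_lt_of_le h0 h
  have e1 : a⁻¹ ≤ (Real.sin x)⁻¹ := inv_anti₀ h0 h
  have e2 : ((1.4142136:ℝ))⁻¹ ≤ (Real.sqrt 2)⁻¹ :=
    inv_anti₀ (Real.sqrt_pos.2 (by norm_num)) sqrt2_lt.le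
  have e3 : a⁻¹ * ((1.4142136:ℝ))⁻¹ ≤ (Real.sin x)⁻¹ * (Real.sqrt 2)⁻¹ :=
    mul_le_mul e1 e2 (by positivity) (by positivity)
  refine le_trans ?_ e3
  rw [← mul_inv, inv_eq_one_div, le_div_iff₀ (by positivity)]
  nlinarith [hc]

private lemma quad_half (t : ℝ) (h0 : 0 ≤ t) (h : t ≤ 1/2) :
    Real.sin (π * t) ≤ 4 * t * (1 - t) := by
  rcases le_or_gt π (4 * (1 - t)) with hA | hB
  · have hs : Real.sin (π * t) ≤ π * t := by
      rcases eq_or_lt_of_le h0 with h0' | h0'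
      · simp [← h0']
      · exact (Real.sin_lt (by positivity)).le
    nlinarith [Real.pi_pos]
  · obtain ⟨s, hsdef⟩ : ∃ s : ℝ, s = 1/2 - t := ⟨_, rfl⟩
    have hs0 : 0 ≤ s := by rw [hsdef]; linarith
    have hπ1 : 3.141592 < π := Real.pi_gt_d6
    have hπ2 : π < 3.141593 := Real.pi_lt_d6
    have hsu2 : s ≤ 0.2853983 := by rw [hsdef]; nlinarith
    have hp2 : (9.8696:ℝ) < π ^ 2 := by nlinarith
    have hp2u : π ^ 2 < 9.8696067 := by nlinarith
    have hp4 : π ^ 4 < 97.41 := by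
      have e : π ^ 4 = (π ^ 2) ^ 2 := by ring
      rw [e]; nlinarith [sq_nonneg (π ^ 2)]
    have hs2 : s ^ 2 ≤ 0.0814532 := by nlinarith
    have hps : π * s ≤ 3.141593 * 0.2853983 := mul_le_mul hπ2.le hsu2 hs0 (by norm_num)
    have habs : |π * s| ≤ 1 := by
      rw [abs_of_nonneg (by positivity)]
      linarith
    have hcb := Real.cos_bound habs
    rw [abs_le] at hcb
    rw [abs_of_nonneg (by positivity : (0:ℝ) ≤ π * s)] at hcb
    have heq : π * t = π/2 - π * s := by rw [hsdef]; ring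
    rw [heq, Real.sin_pi_div_two_sub]
    have hgoal : 4*t*(1-t) = 1 - 4*s^2 := by rw [hsdef]; ring
    rw [hgoal]
    have e4 : (π*s)^4 ≤ 97.41 * (0.0814532 * s^2) := by
      have e : (π*s)^4 = π^4 * (s^2)^2 := by ring
      rw [e]
      calc π^4 * (s^2)^2 ≤ 97.41 * (s^2)^2 :=
            mul_le_mul_of_nonneg_right hp4.le (sq_nonneg _)
        _ ≤ 97.41 * (0.0814532 * s^2) := by nlinarith [sq_nonneg s]
    have e2 : 9.8696 * s^2 ≤ (π*s)^2 := by
      have e : (π*s)^2 = π^2 * s^2 := by ring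
      rw [e]
      exact mul_le_mul_of_nonneg_right hp2.le (sq_nonneg _)
    nlinarith [hcb.2, sq_nonneg s]

private lemma quad (t : ℝ) (h0 : 0 ≤ t) (h1 : t ≤ 1) :
    Real.sin (π * t) ≤ 4 * t * (1 - t) := by
  rcases le_or_gt t (1/2) with h | h
  · exact quad_half t h0 h
  · have := quad_half (1 - t) (by linarith) (by linarith)
    rw [show π * (1 - t) = π - π * t by ring, Real.sin_pi_sub] at this
    nlinarith [this]

private lemma hrefl (m : ℕ) :
    ∑ j ∈ Finset.Icc 1 (m-1), ((m:ℝ) - (j:ℝ))⁻¹ = ∑ j ∈ Finset.Icc 1 (m-1), ((j:ℝ))⁻¹ := by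
  refine Finset.sum_nbij' (fun j => m - j) (fun j => m - j) ?_ ?_ ?_ ?_ ?_
  · intro a ha; simp only [Finset.mem_Icc] at *; omega
  · intro a ha; simp only [Finset.mem_Icc] at *; omega
  · intro a ha; simp only [Finset.mem_Icc] at *; omega
  · intro a ha; simp only [Finset.mem_Icc] at *; omega
  · intro a ha; simp only [Finset.mem_Icc] at ha
    have h1 : a ≤ m := by omega
    have : ((m - a : ℕ) : ℝ) = (m:ℝ) - a := by push_cast [h1]; ring
    rw [this]

private lemma expand4 (f : ℕ → ℝ) : ∑ j ∈ Finset.Icc 1 4, f j = f 1 + f 2 + f 3 + f 4 := by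
  rw [show Finset.Icc 1 4 = {1,2,3,4} from rfl, Finset.sum_insert (by decide),
    Finset.sum_insert (by decide), Finset.sum_insert (by decide), Finset.sum_singleton]
  ring

private lemma expand5 (f : ℕ → ℝ) :
    ∑ j ∈ Finset.Icc 1 5, f j = f 1 + f 2 + f 3 + f 4 + f 5 := by
  rw [show Finset.Icc 1 5 = {1,2,3,4,5} from rfl, Finset.sum_insert (by decide),
    Finset.sum_insert (by decide), Finset.sum_insert (by decide),
    Finset.sum_insert (by decide), Finset.sum_singleton]
  ring

private lemma expand6 (f : ℕ → ℝ) :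
    ∑ j ∈ Finset.Icc 1 6, f j = f 1 + f 2 + f 3 + f 4 + f 5 + f 6 := by
  rw [show Finset.Icc 1 6 = {1,2,3,4,5,6} from rfl, Finset.sum_insert (by decide),
    Finset.sum_insert (by decide), Finset.sum_insert (by decide),
    Finset.sum_insert (by decide), Finset.sum_insert (by decide), Finset.sum_singleton]
  ring

private lemma expand7 (f : ℕ → ℝ) :
    ∑ j ∈ Finset.Icc 1 7, f j = f 1 + f 2 + f 3 + f 4 + f 5 + f 6 + f 7 := by
  rw [show Finset.Icc 1 7 = {1,2,3,4,5,6,7} from rfl, Finset.sum_insert (by decide),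
    Finset.sum_insert (by decide), Finset.sum_insert (by decide),
    Finset.sum_insert (by decide), Finset.sum_insert (by decide),
    Finset.sum_insert (by decide), Finset.sum_singleton]
  ring

private lemma expand8 (f : ℕ → ℝ) :
    ∑ j ∈ Finset.Icc 1 8, f j = f 1 + f 2 + f 3 + f 4 + f 5 + f 6 + f 7 + f 8 := by
  rw [show Finset.Icc 1 8 = {1,2,3,4,5,6,7,8} from rfl, Finset.sum_insert (by decide),
    Finset.sum_insert (by decide), Finset.sum_insert (by decide),
    Finset.sum_insert (by decide), Finset.sum_insert (by decide),
    Finset.sum_insert (by decide), Finset.sum_insert (by decide), Finset.sum_singleton]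
  ring

private lemma big (m : ℕ) (hm : 10 ≤ m) :
    0 < (∑ j ∈ Finset.Icc 1 (m - 1), (Real.sqrt 2 * Real.sin (π * j / m))⁻¹) - (m : ℝ) := by
  have hm0 : (0:ℝ) < m := by positivity
  have hmR : (10:ℝ) ≤ m := by exact_mod_cast hm
  have hterm : ∀ j ∈ Finset.Icc 1 (m-1),
      (Real.sqrt 2)⁻¹ * ((m:ℝ)/4) * (((j:ℝ))⁻¹ + ((m:ℝ)-(j:ℝ))⁻¹)
        ≤ (Real.sqrt 2 * Real.sin (π * j / m))⁻¹ := by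
    intro j hj
    simp only [Finset.mem_Icc] at hj
    have hj1 : (1:ℝ) ≤ (j:ℝ) := by exact_mod_cast hj.1
    have hjm' : j + 1 ≤ m := by omega
    have hjm : (j:ℝ) + 1 ≤ (m:ℝ) := by exact_mod_cast hjm'
    have hq := quad ((j:ℝ)/m) (by positivity) (by rw [div_le_one hm0]; linarith)
    have harg : π * (j:ℝ) / m = π * ((j:ℝ)/m) := by ring
    rw [harg]
    have hsinpos : 0 < Real.sin (π * ((j:ℝ)/m)) := by
      apply Real.sin_pos_of_pos_of_lt_pi
      · positivity
      · nlinarith [Real.pi_pos, (div_lt_one hm0).2 (by linarith : (j:ℝ) < (m:ℝ))]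
    rw [mul_inv, mul_assoc]
    have hid : ((m:ℝ)/4) * (((j:ℝ))⁻¹ + ((m:ℝ)-(j:ℝ))⁻¹)
        = (4*((j:ℝ)/m)*(1 - (j:ℝ)/m))⁻¹ := by
      have hj0 : (0:ℝ) < (j:ℝ) := by linarith
      have hmj : (0:ℝ) < (m:ℝ) - j := by linarith
      field_simp
      ring
    rw [hid]
    exact mul_le_mul_of_nonneg_left (inv_anti₀ hsinpos hq)
      (inv_nonneg.2 (Real.sqrt_nonneg 2))
  have hsum := Finset.sum_le_sum hterm
  have hsplit : ∑ j ∈ Finset.Icc 1 (m-1),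
      (Real.sqrt 2)⁻¹ * ((m:ℝ)/4) * (((j:ℝ))⁻¹ + ((m:ℝ)-(j:ℝ))⁻¹)
      = (Real.sqrt 2)⁻¹ * ((m:ℝ)/4) *
        ((∑ j ∈ Finset.Icc 1 (m-1), ((j:ℝ))⁻¹) + ∑ j ∈ Finset.Icc 1 (m-1), ((m:ℝ)-(j:ℝ))⁻¹) := by
    rw [← Finset.mul_sum, Finset.sum_add_distrib]
  have hH : (7129/2520 : ℝ) ≤ ∑ j ∈ Finset.Icc 1 (m-1), ((j:ℝ))⁻¹ := by
    have hsub : Finset.Icc 1 9 ⊆ Finset.Icc 1 (m-1) := by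
      apply Finset.Icc_subset_Icc le_rfl; omega
    calc (7129/2520 : ℝ) = ∑ j ∈ Finset.Icc (1:ℕ) 9, ((j:ℝ))⁻¹ := by
          norm_num [Finset.sum_Icc_succ_top]
      _ ≤ _ := Finset.sum_le_sum_of_subset_of_nonneg hsub
          (fun i _ _ => by positivity)
  have hs2 : (0:ℝ) < Real.sqrt 2 := by positivity
  have hA : (0.707106:ℝ) < (Real.sqrt 2)⁻¹ := by
    rw [inv_eq_one_div, lt_div_iff₀ hs2]
    nlinarith [sqrt2_lt, Real.sqrt_nonneg 2]
  rw [hrefl m] at hsplit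
  have h2 : (Real.sqrt 2)⁻¹ * ((m:ℝ)/4) * (2*(7129/2520))
      ≤ (Real.sqrt 2)⁻¹ * ((m:ℝ)/4) *
        ((∑ j ∈ Finset.Icc 1 (m-1), ((j:ℝ))⁻¹) + ∑ j ∈ Finset.Icc 1 (m-1), ((j:ℝ))⁻¹) := by
    apply mul_le_mul_of_nonneg_left (by linarith [hH]) (by positivity)
  have hchain : (m:ℝ) < (Real.sqrt 2)⁻¹ * ((m:ℝ)/4) * (2*(7129/2520)) := by
    nlinarith [mul_lt_mul_of_pos_right hA hm0]
  linarith [hsum, hsplit, h2, hchain]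

theorem stmt_11 :
    (∀ m : ℕ, m = 5 ∨ m = 6 ∨ m = 7 ∨ m = 8 →
      (∑ j ∈ Finset.Icc 1 (m - 1), (Real.sqrt 2 * Real.sin (π * j / m))⁻¹) - (m : ℝ) < 0) ∧
    (∀ m : ℕ, 9 ≤ m →
      0 < (∑ j ∈ Finset.Icc 1 (m - 1), (Real.sqrt 2 * Real.sin (π * j / m))⁻¹) - (m : ℝ)) := by
  have hπ1 : 3.141592 < π := Real.pi_gt_d6
  have hπ2 : π < 3.141593 := Real.pi_lt_d6
  constructor
  · rintro m (rfl | rfl | rfl | rfl)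
    · -- m = 5
      rw [show (5:ℕ) - 1 = 4 from rfl, expand4]
      push_cast
      rw [show π * 1 / 5 = π / 5 by ring, show π * 3 / 5 = π - π * 2 / 5 by ring,
        show π * 4 / 5 = π - π / 5 by ring, Real.sin_pi_sub, Real.sin_pi_sub]
      have h1 : (0.566:ℝ) ≤ Real.sin (π / 5) := by
        have h0 : (0:ℝ) < π/5 := by positivity
        have hle : π/5 ≤ 1 := by nlinarith
        have hs := Real.sin_gt_sub_cube h0
        have hcube : (π/5)^3 ≤ (3.141593/5)^3 :=
          pow_le_pow_left₀ h0.le (by nlinarith) 3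
        nlinarith
      have h2 : (0.9506:ℝ) ≤ Real.sin (π * 2 / 5) := by
        rw [show π * 2 / 5 = π/2 - π/10 by ring, Real.sin_pi_div_two_sub]
        have hsq : (π/10)^2 ≤ (3.141593/10)^2 :=
          pow_le_pow_left₀ (by positivity) (by nlinarith) 2
        nlinarith [Real.one_sub_sq_div_two_le_cos (x := π/10)]
      have b1 := term_ub 0.566 1.2494 (by norm_num) h1 (by norm_num)
      have b2 := term_ub 0.9506 0.744 (by norm_num) h2 (by norm_num)
      linarith
    · -- m = 6
      rw [show (6:ℕ) - 1 = 5 from rfl, expand5]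
      push_cast
      rw [show π * 1 / 6 = π / 6 by ring, show π * 4 / 6 = π - π * 2 / 6 by ring,
        show π * 5 / 6 = π - π / 6 by ring, Real.sin_pi_sub, Real.sin_pi_sub]
      have h1 : (0.5:ℝ) ≤ Real.sin (π / 6) := by rw [Real.sin_pi_div_six]; norm_num
      have h2 : (0.866:ℝ) ≤ Real.sin (π * 2 / 6) := by
        rw [show π * 2 / 6 = π/3 by ring, Real.sin_pi_div_three]
        nlinarith [sqrt3_gt]
      have h3 : (1:ℝ) ≤ Real.sin (π * 3 / 6) := by
        rw [show π * 3 / 6 = π/2 by ring, Real.sin_pi_div_two]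
      have b1 := term_ub 0.5 1.41422 (by norm_num) h1 (by norm_num)
      have b2 := term_ub 0.866 0.8166 (by norm_num) h2 (by norm_num)
      have b3 := term_ub 1 0.7071072 (by norm_num) h3 (by norm_num)
      linarith
    · -- m = 7
      rw [show (7:ℕ) - 1 = 6 from rfl, expand6]
      push_cast
      rw [show π * 1 / 7 = π / 7 by ring, show π * 4 / 7 = π - π * 3 / 7 by ring,
        show π * 5 / 7 = π - π * 2 / 7 by ring, show π * 6 / 7 = π - π / 7 by ring,
        Real.sin_pi_sub, Real.sin_pi_sub, Real.sin_pi_sub]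
      have h1 : (0.4261:ℝ) ≤ Real.sin (π / 7) := by
        have h0 : (0:ℝ) < π/7 := by positivity
        have hle : π/7 ≤ 1 := by nlinarith
        have hs := Real.sin_gt_sub_cube h0
        have hcube : (π/7)^3 ≤ (3.141593/7)^3 :=
          pow_le_pow_left₀ h0.le (by nlinarith) 3
        nlinarith
      have h2 : (0.7167:ℝ) ≤ Real.sin (π * 2 / 7) := by
        have h0 : (0:ℝ) < π * 2/7 := by positivity
        have hle : π * 2/7 ≤ 1 := by nlinarith
        have hs := Real.sin_gt_sub_cube h0
        have hcube : (π * 2/7)^3 ≤ (3.141593 * 2/7)^3 :=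
          pow_le_pow_left₀ h0.le (by nlinarith) 3
        nlinarith
      have h3 : (0.9748:ℝ) ≤ Real.sin (π * 3 / 7) := by
        rw [show π * 3 / 7 = π/2 - π/14 by ring, Real.sin_pi_div_two_sub]
        have hsq : (π/14)^2 ≤ (3.141593/14)^2 :=
          pow_le_pow_left₀ (by positivity) (by nlinarith) 2
        nlinarith [Real.one_sub_sq_div_two_le_cos (x := π/14)]
      have b1 := term_ub 0.4261 1.6595 (by norm_num) h1 (by norm_num)
      have b2 := term_ub 0.7167 0.9867 (by norm_num) h2 (by norm_num)
      have b3 := term_ub 0.9748 0.7258 (by norm_num) h3 (by norm_num)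
      linarith
    · -- m = 8
      rw [show (8:ℕ) - 1 = 7 from rfl, expand7]
      push_cast
      rw [show π * 1 / 8 = π / 8 by ring, show π * 5 / 8 = π - π * 3 / 8 by ring,
        show π * 6 / 8 = π - π * 2 / 8 by ring, show π * 7 / 8 = π - π / 8 by ring,
        Real.sin_pi_sub, Real.sin_pi_sub, Real.sin_pi_sub]
      have h1 : (0.37755:ℝ) ≤ Real.sin (π / 8) := by
        have h0 : (0:ℝ) < π/8 := by positivity
        have hle : π/8 ≤ 1 := by nlinarith
        have hs := Real.sin_gt_sub_cube h0
        have hcube : (π/8)^3 ≤ (3.141593/8)^3 :=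
          pow_le_pow_left₀ h0.le (by nlinarith) 3
        nlinarith
      have h2 : (0.7071065:ℝ) ≤ Real.sin (π * 2 / 8) := by
        rw [show π * 2 / 8 = π/4 by ring, Real.sin_pi_div_four]
        nlinarith [sqrt2_gt]
      have h3 : (0.92289:ℝ) ≤ Real.sin (π * 3 / 8) := by
        rw [show π * 3 / 8 = π/2 - π/8 by ring, Real.sin_pi_div_two_sub]
        have hsq : (π/8)^2 ≤ (3.141593/8)^2 :=
          pow_le_pow_left₀ (by positivity) (by nlinarith) 2
        nlinarith [Real.one_sub_sq_div_two_le_cos (x := π/8)]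
      have h4 : (1:ℝ) ≤ Real.sin (π * 4 / 8) := by
        rw [show π * 4 / 8 = π/2 by ring, Real.sin_pi_div_two]
      have b1 := term_ub 0.37755 1.8729 (by norm_num) h1 (by norm_num)
      have b2 := term_ub 0.7071065 1.0001 (by norm_num) h2 (by norm_num)
      have b3 := term_ub 0.92289 0.7668 (by norm_num) h3 (by norm_num)
      have b4 := term_ub 1 0.7071072 (by norm_num) h4 (by norm_num)
      linarith
  · intro m hm
    rcases eq_or_lt_of_le hm with h9 | h10
    · -- m = 9
      subst h9
      rw [show (9:ℕ) - 1 = 8 from rfl, expand8]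
      push_cast
      rw [show π * 1 / 9 = π / 9 by ring, show π * 5 / 9 = π - π * 4 / 9 by ring,
        show π * 6 / 9 = π - π * 3 / 9 by ring, show π * 7 / 9 = π - π * 2 / 9 by ring,
        show π * 8 / 9 = π - π / 9 by ring,
        Real.sin_pi_sub, Real.sin_pi_sub, Real.sin_pi_sub, Real.sin_pi_sub]
      have p1 : 0 < Real.sin (π / 9) :=
        Real.sin_pos_of_pos_of_lt_pi (by positivity) (by nlinarith)
      have p2 : 0 < Real.sin (π * 2 / 9) :=
        Real.sin_pos_of_pos_of_lt_pi (by positivity) (by nlinarith)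
      have p3 : 0 < Real.sin (π * 3 / 9) :=
        Real.sin_pos_of_pos_of_lt_pi (by positivity) (by nlinarith)
      have p4 : 0 < Real.sin (π * 4 / 9) :=
        Real.sin_pos_of_pos_of_lt_pi (by positivity) (by nlinarith)
      have h1 : Real.sin (π / 9) ≤ 0.3490659 := by
        nlinarith [Real.sin_lt (show (0:ℝ) < π/9 by positivity)]
      have h2 : Real.sin (π * 2 / 9) ≤ 0.6981318 := by
        nlinarith [Real.sin_lt (show (0:ℝ) < π * 2/9 by positivity)]
      have h3 : Real.sin (π * 3 / 9) ≤ 0.8660255 := by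
        rw [show π * 3 / 9 = π/3 by ring, Real.sin_pi_div_three]
        nlinarith [sqrt3_lt]
      have h4 : Real.sin (π * 4 / 9) ≤ 1 := Real.sin_le_one _
      have b1 := term_lb 0.3490659 2.0256 p1 h1 (by norm_num) (by norm_num)
      have b2 := term_lb 0.6981318 1.0128 p2 h2 (by norm_num) (by norm_num)
      have b3 := term_lb 0.8660255 0.8164 p3 h3 (by norm_num) (by norm_num)
      have b4 := term_lb 1 0.7071 p4 h4 (by norm_num) (by norm_num)
      linarith
    · exact big m h10
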